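/- Consider the 2D lattice Kuramoto model with coupling range r = √2 (adjacency exactly when the toroidal squared distance is 1 or 2) and the (q1,q2)-twisted state. If cos(2π q1/L) + cos(2π q2/L) + cos(2π(|q1| + |q2|)/L) < 0, then the Jacobian matrix J at the twisted state has a positive eigenvalue; equivalently, there exists x ∈ ℝ^{L²} with xᵀ J x > 0 (the twisted state is linearly unstable). -/

import Mathlib

noncomputable section
open Real Finset Matrix

/-- Toroidal squared distance on the 2D lattice `(ZMod L)²`. -/
def torDist2 (L : ℕ) (x y : ZMod L × ZMod L) : ℕ :=
  (min ((x.1.val : ℤ) - (y.1.val : ℤ)).natAbs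
      (L - ((x.1.val : ℤ) - (y.1.val : ℤ)).natAbs)) ^ 2
  + (min ((x.2.val : ℤ) - (y.2.val : ℤ)).natAbs
      (L - ((x.2.val : ℤ) - (y.2.val : ℤ)).natAbs)) ^ 2

/-- Adjacency with (integer) squared coupling range `r2`:
`A(x,y) = 1` iff `0 < d(x,y) ≤ r2`, else `0`. -/
def adjN2 (L r2 : ℕ) (x y : ZMod L × ZMod L) : ℝ :=
  if 0 < torDist2 L x y ∧ torDist2 L x y ≤ r2 then 1 else 0

/-- The `(q1,q2)`-twisted state `θ_{i,j} = 2π q1 i / L + 2π q2 j / L + C`. -/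
def twisted2 (L : ℕ) (q1 q2 : ℤ) (C : ℝ) (x : ZMod L × ZMod L) : ℝ :=
  2 * π * q1 * x.1.val / L + 2 * π * q2 * x.2.val / L + C

/-- The Jacobian of the 2D lattice Kuramoto model (squared range `r2`) at a configuration `u`. -/
def jac2 (L : ℕ) [NeZero L] (r2 : ℕ) (u : ZMod L × ZMod L → ℝ) :
    Matrix (ZMod L × ZMod L) (ZMod L × ZMod L) ℝ :=
  fun x y =>
    if x = y then -∑ z, adjN2 L r2 x z * Real.cos (u z - u x)
    else adjN2 L r2 x y * Real.cos (u y - u x)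

namespace KuramotoAux

variable {L : ℕ}

/-- abbreviation for the relevant cosines -/
def cv (L : ℕ) (m : ℤ) : ℝ := Real.cos (2 * π * m / L)

lemma cv_shift [NeZero L] (m k : ℤ) : cv L (m + k * L) = cv L m := by
  have hL : (L : ℝ) ≠ 0 := Nat.cast_ne_zero.2 (NeZero.ne L)
  have e : (2 * π * ((m : ℝ) + k * L) / L : ℝ) = 2 * π * m / L + k * (2 * π) := by
    field_simp
  rw [cv, cv]
  push_cast
  rw [e, Real.cos_add_int_mul_two_pi]

lemma cv_neg (m : ℤ) : cv L (-m) = cv L m := by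
  rw [cv, cv]
  push_cast
  rw [show 2 * π * (-(m : ℝ)) / L = -(2 * π * m / L) by ring, Real.cos_neg]

/-- toroidal distance of a single coordinate -/
def Dv (L : ℕ) (a : ZMod L) : ℕ := min a.val (L - a.val)

lemma min_natAbs [NeZero L] (a b : ZMod L) :
    min ((a.val : ℤ) - (b.val : ℤ)).natAbs (L - ((a.val : ℤ) - (b.val : ℤ)).natAbs)
      = Dv L (b - a) := by
  have ha : a.val < L := a.val_lt
  have hb : b.val < L := b.val_lt
  rcases le_or_gt b.val a.val with h | h
  · set m : ℕ := ((a.val : ℤ) - (b.val : ℤ)).natAbs with hmdef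
    have hm : m = a.val - b.val := by omega
    rcases Nat.eq_zero_or_pos m with h0 | h0
    · have hab : a = b := ZMod.val_injective L (by omega)
      subst hab
      simp [Dv, hmdef, Nat.sub_self]
    · have hcast : ((m : ℕ) : ZMod L) = a - b := by
        have e1 : ((a.val - b.val : ℕ) : ZMod L) = (a.val : ZMod L) - (b.val : ZMod L) := by
          push_cast [Nat.cast_sub h]; ring
        rw [hm, e1, ZMod.natCast_rightInverse a, ZMod.natCast_rightInverse b]
      have hab : b - a = -((m : ℕ) : ZMod L) := by rw [hcast]; ring
      have hv : ((m : ℕ) : ZMod L).val = m := ZMod.val_cast_of_lt (by omega)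
      have hne : ((m : ℕ) : ZMod L) ≠ 0 := by
        intro h'
        have := congrArg ZMod.val h'
        rw [hv, ZMod.val_zero] at this
        omega
      rw [hab, Dv, ZMod.neg_val, if_neg hne, hv]
      have e2 : L - (L - m) = m := by omega
      rw [e2, min_comm]
  · set m : ℕ := ((a.val : ℤ) - (b.val : ℤ)).natAbs with hmdef
    have hm : m = b.val - a.val := by omega
    have hcast : ((m : ℕ) : ZMod L) = b - a := by
      have e1 : ((b.val - a.val : ℕ) : ZMod L) = (b.val : ZMod L) - (a.val : ZMod L) := by
        push_cast [Nat.cast_sub h.le]; ring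
      rw [hm, e1, ZMod.natCast_rightInverse a, ZMod.natCast_rightInverse b]
    have hv : ((m : ℕ) : ZMod L).val = m := ZMod.val_cast_of_lt (by omega)
    rw [← hcast, Dv, hv]

lemma torDist2_eq [NeZero L] (x y : ZMod L × ZMod L) :
    torDist2 L x y = Dv L (y.1 - x.1) ^ 2 + Dv L (y.2 - x.2) ^ 2 := by
  rw [torDist2, min_natAbs, min_natAbs]

lemma Dv_zero_iff [NeZero L] (a : ZMod L) : Dv L a = 0 ↔ a = 0 := by
  have ha : a.val < L := a.val_lt
  rw [Dv, Nat.min_eq_zero_iff]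
  constructor
  · intro h
    have : a.val = 0 := by omega
    exact (ZMod.val_eq_zero a).1 this
  · intro h
    subst h
    left
    exact (ZMod.val_eq_zero 0).2 rfl

lemma Dv_one_iff (hL : 2 ≤ L) [NeZero L] (a : ZMod L) : Dv L a = 1 ↔ a = 1 ∨ a = -1 := by
  haveI : Fact (1 < L) := ⟨by omega⟩
  have ha : a.val < L := a.val_lt
  have hv1 : (1 : ZMod L).val = 1 := ZMod.val_one L
  have h1ne : (1 : ZMod L) ≠ 0 := by
    intro h'
    have := congrArg ZMod.val h'
    rw [hv1, ZMod.val_zero] at this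
    omega
  constructor
  · intro h
    rcases min_eq_iff.1 h with ⟨h1, _⟩ | ⟨h1, _⟩
    · left
      have : a = ((1 : ℕ) : ZMod L) := by
        rw [← h1, ZMod.natCast_rightInverse a]
      simpa using this
    · right
      have hval : a.val = L - 1 := by omega
      have : a = ((L - 1 : ℕ) : ZMod L) := by
        rw [← hval, ZMod.natCast_rightInverse a]
      rw [this]
      push_cast [Nat.cast_sub (by omega : 1 ≤ L)]
      simp [ZMod.natCast_self]
  · rintro (rfl | rfl)
    · rw [Dv, hv1]
      have : 1 ≤ L - 1 := by omega
      exact min_eq_left this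
    · rw [Dv, ZMod.neg_val, if_neg h1ne, hv1]
      have e2 : L - (L - 1) = 1 := by omega
      rw [e2]
      exact min_eq_right (by omega)

lemma Dv_neg [NeZero L] (a : ZMod L) : Dv L (-a) = Dv L a := by
  rcases eq_or_ne a 0 with rfl | h
  · simp
  · have ha : a.val < L := a.val_lt
    have ha0 : 0 < a.val := by
      rcases Nat.eq_zero_or_pos a.val with h0 | h0
      · exact absurd ((ZMod.val_eq_zero a).1 h0) h
      · exact h0
    rw [Dv, Dv, ZMod.neg_val, if_neg h]
    have e2 : L - (L - a.val) = a.val := by omega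
    rw [e2, min_comm]

/-- the 8 neighbor offsets -/
def offs (L : ℕ) : Finset (ZMod L × ZMod L) :=
  {(1, 0), (-1, 0), (0, 1), (0, -1), (1, 1), (1, -1), (-1, 1), (-1, -1)}

lemma mem_offs_iff (a : ZMod L × ZMod L) :
    a ∈ offs L ↔ ((a.1 = 1 ∨ a.1 = -1) ∧ a.2 = 0) ∨ ((a.1 = 0) ∧ (a.2 = 1 ∨ a.2 = -1))
      ∨ ((a.1 = 1 ∨ a.1 = -1) ∧ (a.2 = 1 ∨ a.2 = -1)) := by
  simp only [offs, Finset.mem_insert, Finset.mem_singleton, Prod.ext_iff]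
  constructor
  · rintro (h | h | h | h | h | h | h | h) <;> simp [h.1, h.2]
  · rintro (⟨h1 | h1, h2⟩ | ⟨h1, h2 | h2⟩ | ⟨h1 | h1, h2 | h2⟩) <;> simp [h1, h2]

lemma adj_eq (hL : 2 ≤ L) [NeZero L] (x δ : ZMod L × ZMod L) :
    adjN2 L 2 x (x + δ) = if δ ∈ offs L then 1 else 0 := by
  rw [adjN2]
  refine if_congr ?_ rfl rfl
  rw [torDist2_eq]
  have e1 : (x + δ).1 - x.1 = δ.1 := by simp
  have e2 : (x + δ).2 - x.2 = δ.2 := by simp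
  rw [e1, e2]
  have key : ∀ k1 k2 : ℕ, (0 < k1 ^ 2 + k2 ^ 2 ∧ k1 ^ 2 + k2 ^ 2 ≤ 2) ↔
      ((k1 = 1 ∧ k2 = 0) ∨ (k1 = 0 ∧ k2 = 1) ∨ (k1 = 1 ∧ k2 = 1)) := by
    intro k1 k2
    constructor
    · rintro ⟨hpos, hle⟩
      have hb1 : k1 ≤ 1 := by nlinarith
      have hb2 : k2 ≤ 1 := by nlinarith
      interval_cases k1 <;> interval_cases k2 <;> simp_all
    · rintro (⟨rfl, rfl⟩ | ⟨rfl, rfl⟩ | ⟨rfl, rfl⟩) <;> norm_num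
  rw [key, mem_offs_iff]
  rw [Dv_zero_iff, Dv_zero_iff, Dv_one_iff hL, Dv_one_iff hL]

lemma cos_offset [NeZero L] (q1 q2 : ℤ) (C : ℝ) (a δ : ZMod L × ZMod L) :
    Real.cos (twisted2 L q1 q2 C (a + δ) - twisted2 L q1 q2 C a)
      = cv L (q1 * δ.1.val + q2 * δ.2.val) := by
  have hL : (L : ℝ) ≠ 0 := Nat.cast_ne_zero.2 (NeZero.ne L)
  obtain ⟨k1, hk1⟩ : ∃ k : ℤ, (((a.1 + δ.1).val : ℤ)) = a.1.val + δ.1.val - k * L := by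
    refine ⟨((a.1.val + δ.1.val : ℕ) : ℤ) / L, ?_⟩
    rw [ZMod.val_add]
    push_cast
    rw [Int.emod_def]
    ring
  obtain ⟨k2, hk2⟩ : ∃ k : ℤ, (((a.2 + δ.2).val : ℤ)) = a.2.val + δ.2.val - k * L := by
    refine ⟨((a.2.val + δ.2.val : ℕ) : ℤ) / L, ?_⟩
    rw [ZMod.val_add]
    push_cast
    rw [Int.emod_def]
    ring
  have hr1 : (((a.1 + δ.1).val : ℝ)) = (a.1.val : ℝ) + δ.1.val - k1 * L := by
    exact_mod_cast congrArg (fun z : ℤ => (z : ℝ)) hk1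
  have hr2 : (((a.2 + δ.2).val : ℝ)) = (a.2.val : ℝ) + δ.2.val - k2 * L := by
    exact_mod_cast congrArg (fun z : ℤ => (z : ℝ)) hk2
  have key : twisted2 L q1 q2 C (a + δ) - twisted2 L q1 q2 C a
      = 2 * π * ((q1 * δ.1.val + q2 * δ.2.val : ℤ) : ℝ) / L
        + ((-(q1 * k1 + q2 * k2) : ℤ) : ℝ) * (2 * π) := by
    rw [twisted2, twisted2]
    have e1 : (a + δ).1 = a.1 + δ.1 := rfl
    have e2 : (a + δ).2 = a.2 + δ.2 := rfl
    rw [e1, e2, hr1, hr2]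
    push_cast
    field_simp
    ring
  rw [key, Real.cos_add_int_mul_two_pi, cv]

lemma diag_sum (hL : 2 ≤ L) [NeZero L] (q1 q2 : ℤ) (C : ℝ) (a : ZMod L × ZMod L) :
    ∑ z, adjN2 L 2 a z * Real.cos (twisted2 L q1 q2 C z - twisted2 L q1 q2 C a)
      = ∑ δ ∈ offs L, cv L (q1 * δ.1.val + q2 * δ.2.val) := by
  rw [← Equiv.sum_comp (Equiv.addLeft a)
    (fun z => adjN2 L 2 a z * Real.cos (twisted2 L q1 q2 C z - twisted2 L q1 q2 C a))]
  have : ∀ δ : ZMod L × ZMod L,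
      adjN2 L 2 a (Equiv.addLeft a δ) *
        Real.cos (twisted2 L q1 q2 C (Equiv.addLeft a δ) - twisted2 L q1 q2 C a)
      = if δ ∈ offs L then cv L (q1 * δ.1.val + q2 * δ.2.val) else 0 := by
    intro δ
    have e : (Equiv.addLeft a) δ = a + δ := by
      simp [Equiv.addLeft, add_comm]
    rw [e, adj_eq hL, cos_offset]
    by_cases hm : δ ∈ offs L <;> simp [hm]
  rw [Finset.sum_congr rfl (fun δ _ => this δ)]
  rw [Finset.sum_ite_mem, Finset.univ_inter]

lemma one_ne_neg_one (hL : 3 ≤ L) [NeZero L] : (1 : ZMod L) ≠ -1 := by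
  haveI : Fact (1 < L) := ⟨by omega⟩
  intro h'
  have h1 : (1 : ZMod L).val = 1 := ZMod.val_one L
  have h2 : (-1 : ZMod L).val = L - 1 := by
    rw [ZMod.neg_val, if_neg (one_ne_zero), h1]
  have := congrArg ZMod.val h'
  rw [h1, h2] at this
  omega

lemma offs_sum (hL : 3 ≤ L) [NeZero L] (f : ZMod L × ZMod L → ℝ) :
    ∑ δ ∈ offs L, f δ =
      f (1, 0) + f (-1, 0) + f (0, 1) + f (0, -1) + f (1, 1) + f (1, -1)
        + f (-1, 1) + f (-1, -1) := by
  haveI : Fact (1 < L) := ⟨by omega⟩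
  have h10 : (1 : ZMod L) ≠ 0 := one_ne_zero
  have h1m : (1 : ZMod L) ≠ -1 := one_ne_neg_one hL
  have hm0 : (-1 : ZMod L) ≠ 0 := fun h => h10 (by rw [← neg_neg (1 : ZMod L), h, neg_zero])
  have h01 : (0 : ZMod L) ≠ 1 := h10.symm
  have hm1 : (-1 : ZMod L) ≠ 1 := h1m.symm
  have h0m : (0 : ZMod L) ≠ -1 := hm0.symm
  rw [offs]
  rw [Finset.sum_insert (by simp [Prod.ext_iff, h10, h1m, hm0, h01, hm1, h0m])]
  rw [Finset.sum_insert (by simp [Prod.ext_iff, h10, h1m, hm0, h01, hm1, h0m])]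
  rw [Finset.sum_insert (by simp [Prod.ext_iff, h10, h1m, hm0, h01, hm1, h0m])]
  rw [Finset.sum_insert (by simp [Prod.ext_iff, h10, h1m, hm0, h01, hm1, h0m])]
  rw [Finset.sum_insert (by simp [Prod.ext_iff, h10, h1m, hm0, h01, hm1, h0m])]
  rw [Finset.sum_insert (by simp [Prod.ext_iff, h10, h1m, hm0, h01, hm1, h0m])]
  rw [Finset.sum_insert (by simp [Prod.ext_iff, h10, h1m, hm0, h01, hm1, h0m])]
  rw [Finset.sum_singleton]
  ring

lemma val_facts (hL : 2 ≤ L) [NeZero L] :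
    ((0 : ZMod L).val : ℤ) = 0 ∧ ((1 : ZMod L).val : ℤ) = 1
      ∧ ((-1 : ZMod L).val : ℤ) = (L : ℤ) - 1 := by
  haveI : Fact (1 < L) := ⟨by omega⟩
  have h1 : (1 : ZMod L).val = 1 := ZMod.val_one L
  have h2 : (-1 : ZMod L).val = L - 1 := by
    rw [ZMod.neg_val, if_neg (one_ne_zero), h1]
  refine ⟨by simp, by exact_mod_cast congrArg (Nat.cast : ℕ → ℤ) h1, ?_⟩
  rw [h2]
  push_cast [Nat.cast_sub (by omega : 1 ≤ L)]
  ring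

lemma offs_cv_sum (hL : 3 ≤ L) [NeZero L] (q1 q2 : ℤ) :
    ∑ δ ∈ offs L, cv L (q1 * δ.1.val + q2 * δ.2.val)
      = 2 * cv L q1 + 2 * cv L q2 + 2 * cv L (q1 + q2) + 2 * cv L (q1 - q2) := by
  obtain ⟨hv0, hv1, hvm⟩ := val_facts (by omega : 2 ≤ L)
  rw [offs_sum hL (fun δ => cv L (q1 * δ.1.val + q2 * δ.2.val))]
  dsimp only
  rw [hv0, hv1, hvm]
  rw [show q1 * 1 + q2 * 0 = q1 by ring]
  rw [show q1 * ((L : ℤ) - 1) + q2 * 0 = -q1 + q1 * L by ring, cv_shift, cv_neg]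
  rw [show q1 * 0 + q2 * 1 = q2 by ring]
  rw [show q1 * 0 + q2 * ((L : ℤ) - 1) = -q2 + q2 * L by ring, cv_shift, cv_neg]
  rw [show q1 * 1 + q2 * 1 = q1 + q2 by ring]
  rw [show q1 * 1 + q2 * ((L : ℤ) - 1) = (q1 - q2) + q2 * L by ring, cv_shift]
  rw [show q1 * ((L : ℤ) - 1) + q2 * 1 = -(q1 - q2) + q1 * L by ring, cv_shift, cv_neg]
  rw [show q1 * ((L : ℤ) - 1) + q2 * ((L : ℤ) - 1) = -(q1 + q2) + (q1 + q2) * L by ring,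
    cv_shift, cv_neg]
  ring

lemma line_sum [NeZero L] (c : ZMod L) (g : ZMod L × ZMod L → ℝ) :
    ∑ b : ZMod L × ZMod L, (if b.2 = c * b.1 then g b else 0)
      = ∑ t : ZMod L, g (t, c * t) := by
  rw [Fintype.sum_prod_type]
  refine Finset.sum_congr rfl fun i _ => ?_
  dsimp only
  rw [Finset.sum_ite_eq' Finset.univ (c * i) (fun j => g (i, j))]
  simp

lemma line_form_aux (hL : 3 ≤ L) [NeZero L] (q1 q2 : ℤ) (C : ℝ) (c : ZMod L)
    (hc : c = 1 ∨ c = -1) (w : ℤ)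
    (hw1 : cv L (q1 * ((1 : ZMod L).val : ℤ) + q2 * (c.val : ℤ)) = cv L w)
    (hw2 : cv L (q1 * ((-1 : ZMod L).val : ℤ) + q2 * ((-c).val : ℤ)) = cv L w) :
    (fun a : ZMod L × ZMod L => if a.2 = c * a.1 then (1 : ℝ) else 0) ⬝ᵥ
      (jac2 L 2 (twisted2 L q1 q2 C)).mulVec
        (fun a => if a.2 = c * a.1 then (1 : ℝ) else 0)
      = (L : ℝ) * (-(2 * cv L q1 + 2 * cv L q2 + 2 * cv L (q1 + q2) + 2 * cv L (q1 - q2))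
          + 2 * cv L w) := by
  haveI : Fact (1 < L) := ⟨by omega⟩
  have hL2 : 2 ≤ L := by omega
  set J := jac2 L 2 (twisted2 L q1 q2 C) with hJ
  have h10 : (1 : ZMod L) ≠ 0 := one_ne_zero
  have h1m : (1 : ZMod L) ≠ -1 := one_ne_neg_one hL
  have hm0 : (-1 : ZMod L) ≠ 0 := fun h => h10 (by rw [← neg_neg (1 : ZMod L), h, neg_zero])
  -- step 1 : reduce to a double sum over the line
  have e0 : ((fun a : ZMod L × ZMod L => if a.2 = c * a.1 then (1 : ℝ) else 0) ⬝ᵥ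
      J.mulVec (fun a => if a.2 = c * a.1 then (1 : ℝ) else 0))
      = ∑ t : ZMod L, ∑ s : ZMod L, J (t, c * t) (s, c * s) := by
    rw [dotProduct, ← line_sum c (fun a => ∑ s : ZMod L, J a (s, c * s))]
    refine Finset.sum_congr rfl fun a _ => ?_
    by_cases ha : a.2 = c * a.1
    · rw [if_pos ha, if_pos ha, one_mul]
      rw [Matrix.mulVec, dotProduct, ← line_sum c (fun b => J a b)]
      refine Finset.sum_congr rfl fun b _ => ?_
      by_cases hb : b.2 = c * b.1 <;> simp [hb]
    · rw [if_neg ha, if_neg ha, zero_mul]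
  rw [e0]
  -- step 2 : evaluate the inner sum
  have inner_eval : ∀ t : ZMod L, ∑ s : ZMod L, J (t, c * t) (s, c * s)
      = -(2 * cv L q1 + 2 * cv L q2 + 2 * cv L (q1 + q2) + 2 * cv L (q1 - q2))
          + 2 * cv L w := by
    intro t
    set a : ZMod L × ZMod L := (t, c * t) with hadef
    rw [← Equiv.sum_comp (Equiv.addLeft t) (fun s => J a (s, c * s))]
    have ekey : ∀ u : ZMod L, (((Equiv.addLeft t) u : ZMod L), c * ((Equiv.addLeft t) u))
        = a + (u, c * u) := by
      intro u
      simp only [Equiv.coe_addLeft, hadef, Prod.mk_add_mk, Prod.mk.injEq]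
      exact ⟨trivial, by ring⟩
    have ekey2 : (fun u : ZMod L => J a (((Equiv.addLeft t) u : ZMod L),
        c * ((Equiv.addLeft t) u))) = fun u => J a (a + (u, c * u)) := by
      funext u; rw [ekey u]
    rw [show ∑ u : ZMod L, J a (((Equiv.addLeft t) u : ZMod L), c * ((Equiv.addLeft t) u))
        = ∑ u : ZMod L, J a (a + (u, c * u)) from by rw [ekey2]]
    -- restrict the sum to {0, 1, -1}
    rw [← Finset.sum_subset (Finset.subset_univ ({0, 1, -1} : Finset (ZMod L)))
      (fun u _ hu => ?_)]
    swap
    · -- vanishing off {0,1,-1}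
      simp only [Finset.mem_insert, Finset.mem_singleton, not_or] at hu
      obtain ⟨hu0, hu1, hum⟩ := hu
      have hne : a ≠ a + (u, c * u) := by
        intro h'
        have h2 := left_eq_add.1 h'
        exact hu0 (congrArg Prod.fst h2)
      rw [hJ, jac2, if_neg hne, adj_eq hL2, if_neg ?_, zero_mul]
      intro hmem
      rw [mem_offs_iff] at hmem
      dsimp only at hmem
      rcases hmem with ⟨h1 | h1, _⟩ | ⟨h1, _⟩ | ⟨h1 | h1, _⟩ <;>
        first | exact hu1 h1 | exact hum h1 | exact hu0 h1
    -- evaluate the three remaining terms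
    rw [Finset.sum_insert (by simp [h10.symm, hm0.symm]),
      Finset.sum_insert (by simp [h1m]), Finset.sum_singleton]
    have term0 : J a (a + ((0 : ZMod L), c * 0)) =
        -(2 * cv L q1 + 2 * cv L q2 + 2 * cv L (q1 + q2) + 2 * cv L (q1 - q2)) := by
      rw [show ((0 : ZMod L), c * 0) = (0 : ZMod L × ZMod L) by simp, add_zero]
      rw [hJ, jac2, if_pos rfl, diag_sum hL2, offs_cv_sum hL]
    have hmem1 : ((1 : ZMod L), c * 1) ∈ offs L := by
      rcases hc with rfl | rfl <;> simp [offs]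
    have hmemm : ((-1 : ZMod L), c * -1) ∈ offs L := by
      rcases hc with rfl | rfl <;> simp [offs]
    have term1 : J a (a + ((1 : ZMod L), c * 1)) = cv L w := by
      have hne : a ≠ a + ((1 : ZMod L), c * 1) := by
        intro h'
        exact h10 (congrArg Prod.fst (left_eq_add.1 h'))
      rw [hJ, jac2, if_neg hne, adj_eq hL2, if_pos hmem1, one_mul, cos_offset]
      dsimp only
      rw [mul_one, ← hw1]
    have termm : J a (a + ((-1 : ZMod L), c * -1)) = cv L w := by
      have hne : a ≠ a + ((-1 : ZMod L), c * -1) := by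
        intro h'
        exact hm0 (congrArg Prod.fst (left_eq_add.1 h'))
      rw [hJ, jac2, if_neg hne, adj_eq hL2, if_pos hmemm, one_mul, cos_offset]
      dsimp only
      rw [mul_neg_one, ← hw2]
    rw [term0, term1, termm]
    ring
  rw [Finset.sum_congr rfl (fun t _ => inner_eval t), Finset.sum_const, Finset.card_univ,
    ZMod.card, nsmul_eq_mul]

lemma line_form (hL : 3 ≤ L) [NeZero L] (q1 q2 : ℤ) (C : ℝ) (ε : ℤ) (hε : ε = 1 ∨ ε = -1) :
    (fun a : ZMod L × ZMod L => if a.2 = ((ε : ℤ) : ZMod L) * a.1 then (1 : ℝ) else 0) ⬝ᵥ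
      (jac2 L 2 (twisted2 L q1 q2 C)).mulVec
        (fun a => if a.2 = ((ε : ℤ) : ZMod L) * a.1 then (1 : ℝ) else 0)
      = -2 * L * (cv L q1 + cv L q2 + cv L (q1 - ε * q2)) := by
  haveI : Fact (1 < L) := ⟨by omega⟩
  obtain ⟨hv0, hv1, hvm⟩ := val_facts (by omega : 2 ≤ L)
  rcases hε with rfl | rfl
  · have hcast : (((1 : ℤ) : ZMod L)) = 1 := by push_cast; rfl
    rw [show (fun a : ZMod L × ZMod L => if a.2 = ((1 : ℤ) : ZMod L) * a.1 then (1 : ℝ) else 0)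
        = fun a => if a.2 = (1 : ZMod L) * a.1 then (1 : ℝ) else 0 from by rw [hcast]]
    rw [line_form_aux hL q1 q2 C 1 (Or.inl rfl) (q1 + q2) ?_ ?_]
    · rw [show q1 - 1 * q2 = q1 - q2 by ring]
      ring
    · rw [hv1]
      norm_num
    · rw [hvm]
      rw [show q1 * ((L : ℤ) - 1) + q2 * ((L : ℤ) - 1) = -(q1 + q2) + (q1 + q2) * L by ring,
        cv_shift, cv_neg]
  · have hcast : (((-1 : ℤ) : ZMod L)) = -1 := by push_cast; rfl
    rw [show (fun a : ZMod L × ZMod L => if a.2 = ((-1 : ℤ) : ZMod L) * a.1 then (1 : ℝ) else 0)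
        = fun a => if a.2 = (-1 : ZMod L) * a.1 then (1 : ℝ) else 0 from by rw [hcast]]
    rw [line_form_aux hL q1 q2 C (-1) (Or.inr rfl) (q1 - q2) ?_ ?_]
    · rw [show q1 - -1 * q2 = q1 + q2 by ring]
      ring
    · rw [hv1, hvm]
      rw [show q1 * 1 + q2 * ((L : ℤ) - 1) = (q1 - q2) + q2 * L by ring, cv_shift]
    · rw [hvm, neg_neg, hv1]
      rw [show q1 * ((L : ℤ) - 1) + q2 * 1 = -(q1 - q2) + q1 * L by ring, cv_shift, cv_neg]

lemma point_form [NeZero 2] (q1 q2 : ℤ) (C : ℝ) :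
    (fun a : ZMod 2 × ZMod 2 => if a = 0 then (1 : ℝ) else 0) ⬝ᵥ
      (jac2 2 2 (twisted2 2 q1 q2 C)).mulVec
        (fun a => if a = 0 then (1 : ℝ) else 0)
      = -(cv 2 q1 + cv 2 q2 + cv 2 (q1 + q2)) := by
  set J := jac2 2 2 (twisted2 2 q1 q2 C) with hJ
  have inner : ∀ a, (J.mulVec fun b => if b = 0 then (1 : ℝ) else 0) a = J a 0 := by
    intro a
    rw [Matrix.mulVec, dotProduct]
    rw [show (fun b => J a b * if b = 0 then (1 : ℝ) else 0)
        = fun b => if b = 0 then J a b else 0 from by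
      funext b; by_cases hb : b = 0 <;> simp [hb]]
    rw [Finset.sum_ite_eq' Finset.univ (0 : ZMod 2 × ZMod 2) (fun b => J a b)]
    simp
  have e0 : ((fun a : ZMod 2 × ZMod 2 => if a = 0 then (1 : ℝ) else 0) ⬝ᵥ
      J.mulVec (fun a => if a = 0 then (1 : ℝ) else 0)) = J 0 0 := by
    rw [dotProduct]
    rw [show (fun a => (if a = 0 then (1 : ℝ) else 0) *
          (J.mulVec fun b => if b = 0 then (1 : ℝ) else 0) a)
        = fun a => if a = 0 then J a 0 else 0 from by
      funext a; by_cases ha : a = 0 <;> simp [ha, inner]]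
    rw [Finset.sum_ite_eq' Finset.univ (0 : ZMod 2 × ZMod 2) (fun a => J a 0)]
    simp
  rw [e0, hJ, jac2, if_pos rfl, diag_sum (le_refl 2)]
  have hoffs : offs 2 = {((1 : ZMod 2), (0 : ZMod 2)), (0, 1), (1, 1)} := by decide
  rw [hoffs, Finset.sum_insert (by decide), Finset.sum_insert (by decide),
    Finset.sum_singleton]
  have hv1 : (((1 : ZMod 2)).val : ℤ) = 1 := by decide
  have hv0 : (((0 : ZMod 2)).val : ℤ) = 0 := by decide
  dsimp only
  rw [hv0, hv1]
  norm_num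
  ring

lemma jac2_isHermitian [NeZero L] (q1 q2 : ℤ) (C : ℝ) :
    (jac2 L 2 (twisted2 L q1 q2 C)).IsHermitian := by
  rw [Matrix.IsHermitian]
  ext a b
  rw [Matrix.conjTranspose_apply, star_trivial]
  by_cases hab : a = b
  · subst hab; rfl
  · have hadj : adjN2 L 2 b a = adjN2 L 2 a b := by
      rw [adjN2, adjN2]
      have e : torDist2 L b a = torDist2 L a b := by
        rw [torDist2_eq, torDist2_eq,
          show a.1 - b.1 = -(b.1 - a.1) by ring, show a.2 - b.2 = -(b.2 - a.2) by ring,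
          Dv_neg, Dv_neg]
      rw [e]
    have hcos : Real.cos (twisted2 L q1 q2 C a - twisted2 L q1 q2 C b)
        = Real.cos (twisted2 L q1 q2 C b - twisted2 L q1 q2 C a) := by
      rw [← Real.cos_neg, neg_sub]
    rw [jac2]
    simp only [hab, Ne.symm hab, if_false, hadj, hcos]
    rw [jac2, if_neg hab]

lemma exists_pos_eigenvalue [NeZero L] {A : Matrix (ZMod L × ZMod L) (ZMod L × ZMod L) ℝ}
    (hA : A.IsHermitian) {x : ZMod L × ZMod L → ℝ} (hx : 0 < x ⬝ᵥ A.mulVec x) :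
    ∃ μ : ℝ, 0 < μ ∧ Module.End.HasEigenvalue (Matrix.toLin' A) μ := by
  classical
  obtain ⟨i, hi⟩ : ∃ i, 0 < hA.eigenvalues i := by
    by_contra hcon
    push_neg at hcon
    have hB : (-A).PosSemidef := by
      have h1 : -A = (hA.eigenvectorUnitary : Matrix _ _ ℝ) *
          Matrix.diagonal (RCLike.ofReal ∘ fun i => -hA.eigenvalues i) *
          (star (hA.eigenvectorUnitary : Matrix _ _ ℝ)) := by
        conv_lhs => rw [hA.spectral_theorem]
        rw [show Matrix.diagonal (RCLike.ofReal ∘ fun i => -hA.eigenvalues i)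
            = -Matrix.diagonal (RCLike.ofReal ∘ hA.eigenvalues) from by
          rw [show ((RCLike.ofReal ∘ fun i => -hA.eigenvalues i) :
                (ZMod L × ZMod L) → ℝ)
              = fun i => -(((RCLike.ofReal ∘ hA.eigenvalues) :
                (ZMod L × ZMod L) → ℝ) i) from by funext j; simp]
          rw [Matrix.diagonal_neg]]
        rw [Matrix.mul_neg, Matrix.neg_mul]
        rw [Unitary.conjStarAlgAut_apply]
      rw [h1, Matrix.star_eq_conjTranspose]
      refine Matrix.PosSemidef.mul_mul_conjTranspose_same ?_ _
      refine Matrix.posSemidef_diagonal_iff.mpr fun j => ?_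
      simpa using neg_nonneg.2 (hcon j)
    have h2 := hB.dotProduct_mulVec_nonneg x
    rw [Matrix.neg_mulVec, dotProduct_neg] at h2
    simp only [star_trivial] at h2
    linarith
  refine ⟨hA.eigenvalues i, hi, ?_⟩
  apply Module.End.hasEigenvalue_of_hasEigenvector
    (x := (hA.eigenvectorBasis i : ZMod L × ZMod L → ℝ))
  constructor
  · exact Module.End.mem_eigenspace_iff.mpr (hA.mulVec_eigenvectorBasis i)
  · have h0 : hA.eigenvectorBasis i ≠ 0 := by
      have := hA.eigenvectorBasis.toBasis.ne_zero i
      rwa [OrthonormalBasis.coe_toBasis] at this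
    intro h; apply h0; ext j; simpa using congrFun h j

end KuramotoAux

theorem diagonal_coupling_unstable (L : ℕ) [NeZero L] (q1 q2 : ℤ) (C : ℝ)
    (h : Real.cos (2 * π * q1 / L) + Real.cos (2 * π * q2 / L)
        + Real.cos (2 * π * ((|q1| + |q2| : ℤ) : ℝ) / L) < 0) :
    (∃ μ : ℝ, 0 < μ ∧ Module.End.HasEigenvalue
      (Matrix.toLin' (jac2 L 2 (twisted2 L q1 q2 C))) μ) ∧
    ∃ x : ZMod L × ZMod L → ℝ, 0 < x ⬝ᵥ (jac2 L 2 (twisted2 L q1 q2 C)).mulVec x := by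
  classical
  open KuramotoAux in
  have hL0 : 0 < L := Nat.pos_of_ne_zero (NeZero.ne L)
  have h' : KuramotoAux.cv L q1 + KuramotoAux.cv L q2
      + KuramotoAux.cv L (|q1| + |q2|) < 0 := h
  rcases eq_or_ne L 1 with rfl | hL1
  · exfalso
    have hone : ∀ m : ℤ, KuramotoAux.cv 1 m = 1 := by
      intro m
      rw [KuramotoAux.cv, show 2 * π * (m : ℝ) / ((1 : ℕ) : ℝ) = m * (2 * π) by
        push_cast; ring]
      exact Real.cos_int_mul_two_pi m
    rw [hone q1, hone q2, hone _] at h'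
    norm_num at h'
  have hx : ∃ x : ZMod L × ZMod L → ℝ, 0 < x ⬝ᵥ (jac2 L 2 (twisted2 L q1 q2 C)).mulVec x := by
    rcases eq_or_ne L 2 with rfl | hL2
    · refine ⟨fun a => if a = 0 then 1 else 0, ?_⟩
      rw [KuramotoAux.point_form q1 q2 C]
      obtain ⟨k, hk⟩ : ∃ k : ℤ, |q1| + |q2| = (q1 + q2) + k * ((2 : ℕ) : ℤ) := by
        rcases abs_cases q1 with ⟨e1, _⟩ | ⟨e1, _⟩ <;>
          rcases abs_cases q2 with ⟨e2, _⟩ | ⟨e2, _⟩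
        · exact ⟨0, by omega⟩
        · exact ⟨-q2, by omega⟩
        · exact ⟨-q1, by omega⟩
        · exact ⟨-(q1 + q2), by omega⟩
      have he : KuramotoAux.cv 2 (|q1| + |q2|) = KuramotoAux.cv 2 (q1 + q2) := by
        rw [hk]
        exact KuramotoAux.cv_shift (q1 + q2) k
      rw [he] at h'
      linarith
    · have hL3 : 3 ≤ L := by omega
      have hLR : (0 : ℝ) < L := by exact_mod_cast hL0
      rcases le_or_gt 0 q1 with hq1 | hq1 <;> rcases le_or_gt 0 q2 with hq2 | hq2
      · refine ⟨fun a => if a.2 = ((-1 : ℤ) : ZMod L) * a.1 then (1 : ℝ) else 0, ?_⟩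
        rw [KuramotoAux.line_form hL3 q1 q2 C (-1) (Or.inr rfl)]
        rw [show q1 - (-1) * q2 = |q1| + |q2| by
          rw [abs_of_nonneg hq1, abs_of_nonneg hq2]; ring]
        nlinarith
      · refine ⟨fun a => if a.2 = ((1 : ℤ) : ZMod L) * a.1 then (1 : ℝ) else 0, ?_⟩
        rw [KuramotoAux.line_form hL3 q1 q2 C 1 (Or.inl rfl)]
        rw [show q1 - 1 * q2 = |q1| + |q2| by
          rw [abs_of_nonneg hq1, abs_of_neg hq2]; ring]
        nlinarith
      · refine ⟨fun a => if a.2 = ((1 : ℤ) : ZMod L) * a.1 then (1 : ℝ) else 0, ?_⟩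
        rw [KuramotoAux.line_form hL3 q1 q2 C 1 (Or.inl rfl)]
        rw [show q1 - 1 * q2 = -(|q1| + |q2|) by
          rw [abs_of_neg hq1, abs_of_nonneg hq2]; ring, KuramotoAux.cv_neg]
        nlinarith
      · refine ⟨fun a => if a.2 = ((-1 : ℤ) : ZMod L) * a.1 then (1 : ℝ) else 0, ?_⟩
        rw [KuramotoAux.line_form hL3 q1 q2 C (-1) (Or.inr rfl)]
        rw [show q1 - (-1) * q2 = -(|q1| + |q2|) by
          rw [abs_of_neg hq1, abs_of_neg hq2]; ring, KuramotoAux.cv_neg]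
        nlinarith
  obtain ⟨x, hxx⟩ := hx
  exact ⟨KuramotoAux.exists_pos_eigenvalue (KuramotoAux.jac2_isHermitian q1 q2 C) hxx,
    ⟨x, hxx⟩⟩
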